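/- For every integer r ≥ 2, let k = ⌈(r−2)/2⌉ and l = ⌊(r−2)/2⌋. Then the chain consisting of k entries equal to 3, followed by one entry 5, followed by l entries equal to 3, followed by one entry 2 (a list of length r of the form [3, …, 3, 5, 3, …, 3, 2]) has Hirzebruch–Jung continued fraction equal to F_{r−1}² / (F_{r−1}·F_{r−3} − 1); hence it is a T-chain with parameters (d, n, a) = (1, F_{r−1}, F_{r−3}), attaining equality n = F_{r−d} in the Fibonacci bound. -/
import Mathlib


/-- Hirzebruch–Jung continued fraction of a list of integers:
`hjcf [] = 0` (junk value), `hjcf (b :: l) = b - 1 / hjcf l`.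
Since `(0 : ℚ)⁻¹ = 0`, this gives `hjcf [b] = b`, matching the recursion
`[b_r] = b_r`, `[b_1, …, b_r] = b_1 − 1/[b_2, …, b_r]`. -/
def hjcf : List ℤ → ℚ
  | [] => 0
  | b :: l => (b : ℚ) - (hjcf l)⁻¹

/-- `IsTChain l d n a` : the nonempty list `l` of integers, all ≥ 2, is a T-chain
with parameters `(d, n, a)`, i.e. its Hirzebruch–Jung continued fraction equals
`d n² / (d n a − 1)` where `d ≥ 1`, `n ≥ 2`, `0 < a < n`, `gcd(n, a) = 1`. -/
def IsTChain (l : List ℤ) (d n a : ℤ) : Prop :=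
  l ≠ [] ∧ (∀ b ∈ l, 2 ≤ b) ∧
  1 ≤ d ∧ 2 ≤ n ∧ 0 < a ∧ a < n ∧ Int.gcd n a = 1 ∧
  hjcf l = (d * n ^ 2 : ℚ) / (d * n * a - 1)

/-- For r ≥ 2, with k = ⌈(r−2)/2⌉ and l = ⌊(r−2)/2⌋, the chain
[3^k, 5, 3^l, 2] of length r has HJ continued fraction
F_{r−1}² / (F_{r−1}·F_{r−3} − 1) and is a T-chain with parameters
(1, F_{r−1}, F_{r−3}), attaining n = F_{r−d}.  Here F_i = Nat.fib (i+3), so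
F_{r−1} = Nat.fib (r+2) and F_{r−3} = Nat.fib r. -/
def cfp : List ℤ → ℤ × ℤ
  | [] => (1, 0)
  | b :: l => (b * (cfp l).1 - (cfp l).2, (cfp l).1)

lemma cfp_spec (l : List ℤ) (h : ∀ b ∈ l, 2 ≤ b) :
    (cfp l).2 < (cfp l).1 ∧ 0 ≤ (cfp l).2 ∧ (l ≠ [] → 1 ≤ (cfp l).2) ∧
    hjcf l = ((cfp l).1 : ℚ) / ((cfp l).2 : ℚ) := by
  induction l with
  | nil => simp [cfp, hjcf]
  | cons b t ih =>
    have hb : 2 ≤ b := h b (by simp)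
    obtain ⟨h1, h2, h3, h4⟩ := ih (fun x hx => h x (by simp [hx]))
    rcases eq_or_ne t [] with rfl | ht
    · refine ⟨by simp [cfp]; omega, by simp [cfp], fun _ => by simp [cfp], ?_⟩
      simp [cfp, hjcf]
    · have hq1 : 1 ≤ (cfp t).2 := h3 ht
      have hp : (0:ℤ) < (cfp t).1 := by omega
      refine ⟨?_, ?_, fun _ => ?_, ?_⟩
      · show (cfp t).1 < b * (cfp t).1 - (cfp t).2
        nlinarith
      · show (0:ℤ) ≤ (cfp t).1
        omega
      · show (1:ℤ) ≤ (cfp t).1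
        omega
      · show (b:ℚ) - (hjcf t)⁻¹ = _
        rw [h4, inv_div]
        have hpQ : ((cfp t).1 : ℚ) ≠ 0 := by exact_mod_cast hp.ne'
        show _ = ((b * (cfp t).1 - (cfp t).2 : ℤ) : ℚ) / (((cfp t).1 : ℤ) : ℚ)
        push_cast
        field_simp

lemma fib_cast_add_two (n : ℕ) :
    (Nat.fib (n+2) : ℤ) = Nat.fib n + Nat.fib (n+1) := by
  rw [Nat.fib_add_two]; push_cast; ring

lemma cassini (n : ℕ) :
    (Nat.fib (n+1) : ℤ)^2 - Nat.fib (n+2) * Nat.fib n = (-1)^n := by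
  induction n with
  | zero => simp
  | succ n ih =>
    have h := fib_cast_add_two (n+1)
    have h2 := fib_cast_add_two n
    rw [pow_succ]
    linear_combination -ih - (Nat.fib (n+1) : ℤ) * h + (Nat.fib (n+2) : ℤ) * h2

lemma cassini_even (m : ℕ) :
    (Nat.fib (2*m+1) : ℤ)^2 - Nat.fib (2*m+2) * Nat.fib (2*m) = 1 := by
  have := cassini (2*m)
  rwa [pow_mul, neg_one_sq, one_pow] at this

lemma fib3_eq : Nat.fib 3 = 2 := by rfl

lemma cfp_tail (m : ℕ) :
    cfp (List.replicate m 3 ++ [2]) = ((Nat.fib (2*m+3) : ℤ), (Nat.fib (2*m+1) : ℤ)) := by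
  induction m with
  | zero => simp [cfp, fib3_eq]
  | succ m ih =>
    have e : List.replicate (m+1) (3:ℤ) ++ [2] = 3 :: (List.replicate m 3 ++ [2]) := by
      rw [List.replicate_succ, List.cons_append]
    rw [e]
    show (3 * (cfp _).1 - (cfp _).2, (cfp _).1) = _
    rw [ih]
    have e1 : 2*(m+1)+3 = 2*m+5 := by ring
    have e2 : 2*(m+1)+1 = 2*m+3 := by ring
    rw [e1, e2, Prod.mk.injEq]
    have h1 : (Nat.fib (2*m+2) : ℤ) = Nat.fib (2*m) + Nat.fib (2*m+1) := fib_cast_add_two _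
    have h2 : (Nat.fib (2*m+3) : ℤ) = Nat.fib (2*m+1) + Nat.fib (2*m+2) := fib_cast_add_two _
    have h3 : (Nat.fib (2*m+4) : ℤ) = Nat.fib (2*m+2) + Nat.fib (2*m+3) := fib_cast_add_two _
    have h4 : (Nat.fib (2*m+5) : ℤ) = Nat.fib (2*m+3) + Nat.fib (2*m+4) := fib_cast_add_two _
    exact ⟨by linarith, rfl⟩

lemma cfp_rep3 (k : ℕ) (l : List ℤ) :
    cfp (List.replicate k 3 ++ l) =
      ((Nat.fib (2*k+2) : ℤ) * (cfp l).1 - (Nat.fib (2*k) : ℤ) * (cfp l).2,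
       (Nat.fib (2*k) : ℤ) * (cfp l).1 - (3 * (Nat.fib (2*k) : ℤ) - (Nat.fib (2*k+2) : ℤ)) * (cfp l).2) := by
  induction k with
  | zero => simp [Nat.fib]
  | succ k ih =>
    have e : List.replicate (k+1) (3:ℤ) ++ l = 3 :: (List.replicate k 3 ++ l) := by
      rw [List.replicate_succ, List.cons_append]
    rw [e]
    show (3 * (cfp _).1 - (cfp _).2, (cfp _).1) = _
    rw [ih]
    have e1 : 2*(k+1)+2 = 2*k+4 := by ring
    have e2 : 2*(k+1) = 2*k+2 := by ring
    rw [e1, e2, Prod.mk.injEq]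
    have h1 : (Nat.fib (2*k+2) : ℤ) = Nat.fib (2*k) + Nat.fib (2*k+1) := fib_cast_add_two _
    have h2 : (Nat.fib (2*k+3) : ℤ) = Nat.fib (2*k+1) + Nat.fib (2*k+2) := fib_cast_add_two _
    have h3 : (Nat.fib (2*k+4) : ℤ) = Nat.fib (2*k+2) + Nat.fib (2*k+3) := fib_cast_add_two _
    have hC : (Nat.fib (2*k+4) : ℤ) = 3 * Nat.fib (2*k+2) - Nat.fib (2*k) := by linarith
    constructor
    · show (3:ℤ) * _ - _ = _
      linear_combination -(cfp l).1 * hC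
    · show (Nat.fib (2*k+2) : ℤ) * (cfp l).1 - _ * (cfp l).2 = _
      linear_combination -(cfp l).2 * hC

lemma cfp_chain (k m : ℕ) (hkm : k = m ∨ k = m + 1) :
    cfp (List.replicate k 3 ++ 5 :: (List.replicate m 3 ++ [2])) =
      ((Nat.fib (k+m+4) : ℤ)^2, (Nat.fib (k+m+4) : ℤ) * (Nat.fib (k+m+2) : ℤ) - 1) := by
  have ht : cfp ((5:ℤ) :: (List.replicate m 3 ++ [2])) =
      (5 * (Nat.fib (2*m+3):ℤ) - Nat.fib (2*m+1), (Nat.fib (2*m+3):ℤ)) := by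
    show (5 * (cfp _).1 - (cfp _).2, (cfp _).1) = _
    rw [cfp_tail]
  rw [cfp_rep3, ht]
  have h1 : (Nat.fib (2*m+2) : ℤ) = Nat.fib (2*m) + Nat.fib (2*m+1) := fib_cast_add_two _
  have h2 : (Nat.fib (2*m+3) : ℤ) = Nat.fib (2*m+1) + Nat.fib (2*m+2) := fib_cast_add_two _
  have h3 : (Nat.fib (2*m+4) : ℤ) = Nat.fib (2*m+2) + Nat.fib (2*m+3) := fib_cast_add_two _
  have h4 : (Nat.fib (2*m+5) : ℤ) = Nat.fib (2*m+3) + Nat.fib (2*m+4) := fib_cast_add_two _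
  have hc := cassini_even m
  rcases hkm with rfl | rfl
  · rw [show k+k+4 = 2*k+4 from by ring, show k+k+2 = 2*k+2 from by ring, Prod.mk.injEq]
    simp only [h4, h3, h2, h1] at *
    constructor
    · ring
    · linear_combination -hc
  · rw [show 2*(m+1)+2 = 2*m+4 from by ring, show 2*(m+1) = 2*m+2 from by ring,
        show m+1+m+4 = 2*m+5 from by ring, show m+1+m+2 = 2*m+3 from by ring, Prod.mk.injEq]
    simp only [h4, h3, h2, h1] at *
    constructor
    · ring
    · linear_combination -hc


theorem fib_chain_optimal (r : ℕ) (hr : 2 ≤ r) :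
    let c : List ℤ := List.replicate ((r - 1) / 2) 3 ++ 5 :: (List.replicate ((r - 2) / 2) 3 ++ [2])
    c.length = r ∧
    hjcf c = ((Nat.fib (r + 2) : ℚ)) ^ 2 / ((Nat.fib (r + 2) : ℚ) * (Nat.fib r : ℚ) - 1) ∧
    IsTChain c 1 (Nat.fib (r + 2) : ℤ) (Nat.fib r : ℤ) := by
  intro c
  have hc : c = List.replicate ((r - 1) / 2) 3 ++ 5 :: (List.replicate ((r - 2) / 2) 3 ++ [2]) := rfl
  have hkm : (r-1)/2 = (r-2)/2 ∨ (r-1)/2 = (r-2)/2 + 1 := by omega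
  have hch := cfp_chain ((r-1)/2) ((r-2)/2) hkm
  rw [show (r-1)/2 + (r-2)/2 + 4 = r + 2 from by omega,
      show (r-1)/2 + (r-2)/2 + 2 = r from by omega] at hch
  have hmem : ∀ b ∈ c, 2 ≤ b := by
    rw [hc]
    intro b hb
    simp at hb
    rcases hb with (⟨-,rfl⟩|rfl|⟨-,rfl⟩|rfl) <;> norm_num
  have spec := cfp_spec c hmem
  rw [hc] at spec
  rw [hch] at spec
  have heq : hjcf c = ((Nat.fib (r + 2) : ℚ)) ^ 2 / ((Nat.fib (r + 2) : ℚ) * (Nat.fib r : ℚ) - 1) := by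
    rw [hc, spec.2.2.2]
    push_cast
    ring_nf
  have hlen : c.length = r := by rw [hc]; simp; omega
  have hn2 : (2:ℤ) ≤ (Nat.fib (r+2) : ℤ) := by
    have h4 : Nat.fib 4 ≤ Nat.fib (r+2) := Nat.fib_mono (by omega)
    have : Nat.fib 4 = 3 := by rfl
    omega
  have hapos : (0:ℤ) < (Nat.fib r : ℤ) := by
    have := Nat.fib_pos.mpr (show 0 < r by omega)
    omega
  have haltn : (Nat.fib r : ℤ) < (Nat.fib (r+2) : ℤ) := by
    have h1 : Nat.fib r ≤ Nat.fib (r+1) := Nat.fib_mono (by omega)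
    have h2 : Nat.fib (r+1) < Nat.fib (r+2) := Nat.fib_lt_fib_succ (by omega)
    omega
  have hgcd : Int.gcd (Nat.fib (r+2) : ℤ) (Nat.fib r : ℤ) = 1 := by
    rw [Int.gcd_natCast_natCast]
    rw [Nat.fib_add_two, Nat.add_comm]
    exact Nat.coprime_add_self_left.mpr (Nat.fib_coprime_fib_succ r).symm
  refine ⟨hlen, heq, ?_, hmem, le_refl 1, hn2, hapos, haltn, hgcd, ?_⟩
  · rw [hc]; simp
  · rw [heq]; push_cast; ring_nf
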